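/- For every 4-list assignment (ℓ_i)_{i≥1} (each ℓ_i a set of exactly 4 letters) and every n ≥ 1, the number of square-free words of length n that respect the list assignment is at least 2.45^n. -/

import Mathlib

/-- A word is square-free if no factor of it is a square `u ++ u` with `u` nonempty. -/
def SquareFree {α : Type*} (w : List α) : Prop :=
  ∀ u : List α, u ≠ [] → ¬ (u ++ u) <:+: w

/-- A word `w` respects the list assignment `ℓ` if its `i`-th letter belongs to `ℓ i`. -/
def Respects {α : Type*} (ℓ : ℕ → Finset α) (w : List α) : Prop :=
  ∀ (i : ℕ) (h : i < w.length), w[i] ∈ ℓ i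

namespace SFP
open List



/-- total indexing -/
def g (v : List ℕ) (i : ℕ) : ℕ := v.getD i 0

theorem g_eq {l : List ℕ} {i : ℕ} (h : i < l.length) : g l i = l[i] :=
  List.getD_eq_getElem l 0 h

theorem g_cons_zero {c : ℕ} {r : List ℕ} : g (c :: r) 0 = c := rfl
theorem g_cons_succ {c : ℕ} {r : List ℕ} {i : ℕ} : g (c :: r) (i+1) = g r i := rfl

theorem g_append_left {l m : List ℕ} {i : ℕ} (h : i < l.length) : g (l ++ m) i = g l i := by
  rw [g_eq (by simp; omega), g_eq h, List.getElem_append_left h]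

theorem g_append_right {l m : List ℕ} {i : ℕ} (h : i < m.length) :
    g (l ++ m) (l.length + i) = g m i := by
  rw [g_eq (by simp; omega), g_eq h]
  rw [List.getElem_append_right (by omega)]
  congr 1
  omega

theorem g_drop {l : List ℕ} {k i : ℕ} (h : k + i < l.length) : g (l.drop k) i = g l (k + i) := by
  rw [g_eq (by simp; omega), g_eq h, List.getElem_drop]

theorem g_take {l : List ℕ} {k i : ℕ} (hik : i < k) (h : i < l.length) :
    g (l.take k) i = g l i := by
  rw [g_eq (by simp; omega), g_eq h, List.getElem_take]

theorem g_ext {l m : List ℕ} (hlen : l.length = m.length)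
    (h : ∀ i < l.length, g l i = g m i) : l = m := by
  apply List.ext_getElem hlen
  intro i h1 h2
  rw [← g_eq h1, ← g_eq h2]
  exact h i h1

theorem sqf_infix {α} {w w' : List α} (h : w' <:+: w) (hw : SquareFree w) : SquareFree w' :=
  fun u hu hinf => hw u hu (hinf.trans h)

theorem sqf_reverse {α} {w : List α} (hw : SquareFree w) : SquareFree w.reverse := by
  intro u hu hinf
  apply hw u.reverse (by simpa using hu)
  have : (u ++ u).reverse <:+: w.reverse.reverse := List.reverse_infix.mpr hinf
  simpa using this

/-- prefix-square predicate -/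
def PSq (p : ℕ) (v : List ℕ) : Prop :=
  2 * p ≤ v.length ∧ ∀ i < p, g v i = g v (i + p)

theorem psq_of_square {u t : List ℕ} (v : List ℕ) (hv : v = u ++ u ++ t) :
    PSq u.length v := by
  subst hv
  refine ⟨by simp; omega, ?_⟩
  intro i hi
  rw [List.append_assoc]
  rw [g_append_left (by omega), show i + u.length = u.length + i by omega,
    g_append_right (by simp; omega), g_append_left hi]

theorem psq_take_eq {p : ℕ} {v : List ℕ} (h : PSq p v) :
    (v.drop p).take p = v.take p := by
  obtain ⟨hlen, heq⟩ := h
  apply g_ext (by simp; omega)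
  intro i hI
  have hi : i < p := by simp at hI; omega
  rw [g_take hi (by simp; omega), g_take hi (by omega), g_drop (by omega),
    show p + i = i + p by omega]
  exact (heq i hi).symm

theorem square_of_psq {p : ℕ} {v : List ℕ} (hp : 1 ≤ p) (h : PSq p v) :
    (v.take p) ++ (v.take p) <+: v := by
  have hlen := h.1
  have hdp : v.take p <+: v.drop p := by
    refine ⟨(v.drop p).drop p, ?_⟩
    rw [← psq_take_eq h]
    simp
  obtain ⟨s, hs⟩ := hdp
  refine ⟨s, ?_⟩
  conv_rhs => rw [← List.take_append_drop p v]
  rw [List.append_assoc, hs]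

theorem not_sqf_of_psq {p : ℕ} {v : List ℕ} (hp : 1 ≤ p) (h : PSq p v) :
    ¬ SquareFree v := by
  intro hsf
  have hL := h.1
  have hlen : (v.take p).length = p := by simp; omega
  apply hsf (v.take p)
    (by intro hnil; rw [hnil] at hlen; simp at hlen; omega)
  exact (square_of_psq hp h).isInfix

/-- main square-producing lemma from index equalities inside v -/
theorem not_sqf_of_eq {v : List ℕ} {i p : ℕ} (hp : 1 ≤ p) (hlen : i + 2 * p ≤ v.length)
    (heq : ∀ j < p, g v (i + j) = g v (i + p + j)) : ¬ SquareFree v := by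
  intro hsf
  apply not_sqf_of_psq hp (v := v.drop i) ?_ (sqf_infix (List.drop_suffix i v).isInfix hsf)
  refine ⟨by simp; omega, ?_⟩
  intro j hj
  rw [g_drop (by omega), g_drop (by omega), show i + (j + p) = i + p + j by omega]
  exact heq j hj

/-- if r is squarefree but c::r is not, there is a prefix square -/
theorem exists_psq {r : List ℕ} {c : ℕ} (hr : SquareFree r) (hv : ¬ SquareFree (c :: r)) :
    ∃ p, 1 ≤ p ∧ 2 * p ≤ r.length + 1 ∧ PSq p (c :: r) := by
  rw [SquareFree] at hv
  push_neg at hv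
  obtain ⟨u, hu, hinf⟩ := hv
  obtain ⟨s, t, hst⟩ := hinf
  cases s with
  | nil =>
      have hps : PSq u.length (c :: r) := psq_of_square _ (by simpa using hst.symm)
      refine ⟨u.length, ?_, ?_, hps⟩
      · cases u with
        | nil => simp at hu
        | cons a l => simp
      · have := hps.1
        simpa using this
  | cons a s' =>
      exfalso
      apply hr u hu
      refine ⟨s', t, ?_⟩
      have h2 : a :: (s' ++ (u ++ u) ++ t) = c :: r := by simpa using hst
      injection h2 with h4 h3

/-- reconstruction: PSq p v determines v from v.drop p -/
theorem psq_reconstruct {p : ℕ} {v : List ℕ} (h : PSq p v) :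
    v = (v.drop p).take p ++ v.drop p := by
  conv_lhs => rw [← List.take_append_drop p v]
  rw [psq_take_eq h]

def RW (ℓ : ℕ → Finset ℕ) : ℕ → Finset (List ℕ)
  | 0 => {[]}
  | n+1 => ((ℓ n) ×ˢ RW ℓ n).image (fun p => p.1 :: p.2)

theorem mem_RW {ℓ : ℕ → Finset ℕ} {n : ℕ} {r : List ℕ} :
    r ∈ RW ℓ n ↔ r.length = n ∧ ∀ i < n, g r i ∈ ℓ (n - 1 - i) := by
  induction n generalizing r with
  | zero => simp [RW]
  | succ n ih =>
    simp only [RW, Finset.mem_image, Finset.mem_product]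
    constructor
    · rintro ⟨⟨c, w⟩, ⟨hc, hw⟩, rfl⟩
      obtain ⟨hlen, hmem⟩ := ih.mp hw
      refine ⟨by simp [hlen], ?_⟩
      intro i hi
      match i with
      | 0 => simpa [g_cons_zero] using hc
      | j+1 =>
          rw [g_cons_succ]
          have := hmem j (by omega)
          convert this using 2
          omega
    · rintro ⟨hlen, hmem⟩
      match r with
      | [] => simp at hlen
      | c :: w =>
          refine ⟨⟨c, w⟩, ⟨?_, ?_⟩, rfl⟩
          · have := hmem 0 (by omega)
            simpa [g_cons_zero] using this
          · apply ih.mpr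
            refine ⟨by simpa using hlen, ?_⟩
            intro j hj
            have := hmem (j+1) (by omega)
            rw [g_cons_succ] at this
            convert this using 2
            omega

variable (ℓ : ℕ → Finset ℕ)

open Classical in
noncomputable def A (n : ℕ) : Finset (List ℕ) := (RW ℓ n).filter (fun r => SquareFree r)

open Classical in
noncomputable def Cls (P : List ℕ → Prop) (n : ℕ) : Finset (List ℕ) :=
  (A ℓ n).filter P

def pX2 (r : List ℕ) : Prop := 3 ≤ r.length ∧ g r 0 = g r 2
def pY  (r : List ℕ) : Prop := 4 ≤ r.length ∧ g r 0 = g r 3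
def pX3 (r : List ℕ) : Prop := 5 ≤ r.length ∧ g r 0 = g r 3 ∧ g r 1 = g r 4
def pZ1 (r : List ℕ) : Prop := 5 ≤ r.length ∧ g r 0 = g r 4
def pZ2 (r : List ℕ) : Prop := 6 ≤ r.length ∧ g r 0 = g r 4 ∧ g r 1 = g r 5
def pX4 (r : List ℕ) : Prop := 7 ≤ r.length ∧ g r 0 = g r 4 ∧ g r 1 = g r 5 ∧ g r 2 = g r 6

theorem mem_A {n : ℕ} {r : List ℕ} :
    r ∈ A ℓ n ↔ r ∈ RW ℓ n ∧ SquareFree r := by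
  simp [A]

theorem mem_Cls {P : List ℕ → Prop} {n : ℕ} {r : List ℕ} :
    r ∈ Cls ℓ P n ↔ r ∈ A ℓ n ∧ P r := by
  simp [Cls]

theorem A_length {n : ℕ} {r : List ℕ} (h : r ∈ A ℓ n) : r.length = n :=
  ((mem_RW).mp ((mem_A ℓ).mp h).1).1

theorem A_sqf {n : ℕ} {r : List ℕ} (h : r ∈ A ℓ n) : SquareFree r :=
  ((mem_A ℓ).mp h).2

/-- the tail of a word in `A (n+1)` is in `A n` -/
theorem tail_mem_A {n : ℕ} {c : ℕ} {r : List ℕ} (h : (c :: r) ∈ A ℓ (n+1)) : r ∈ A ℓ n := by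
  rw [mem_A] at h ⊢
  obtain ⟨hrw, hsf⟩ := h
  refine ⟨?_, sqf_infix (List.tail_suffix (c :: r)).isInfix hsf⟩
  rw [mem_RW] at hrw ⊢
  obtain ⟨hlen, hmem⟩ := hrw
  refine ⟨by simpa using hlen, ?_⟩
  intro i hi
  have := hmem (i+1) (by omega)
  rw [g_cons_succ] at this
  convert this using 2
  omega

/-- generic: counting lemma via tail map -/
theorem card_tail_le {n : ℕ} (S : Finset (List ℕ)) (T U : Finset (List ℕ))
    (k : ℕ)
    (hS : ∀ v ∈ S, ∃ c r, v = c :: r ∧ c = g r k)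
    (hT : ∀ v ∈ S, v.tail ∈ T)
    (hU : ∀ v ∈ S, v.tail ∉ U)
    (hUT : U ⊆ T) :
    S.card + U.card ≤ T.card := by
  classical
  have hinj : Set.InjOn List.tail (S : Set (List ℕ)) := by
    intro a ha b hb hab
    obtain ⟨ca, ra, rfl, hca⟩ := hS a ha
    obtain ⟨cb, rb, rfl, hcb⟩ := hS b hb
    simp only [List.tail_cons] at hab
    subst hab
    rw [hca, hcb]
  have h1 : S.card ≤ (T \ U).card := by
    apply Finset.card_le_card_of_injOn List.tail
    · intro v hv
      rw [Finset.mem_coe, Finset.mem_sdiff]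
      exact ⟨hT v hv, hU v hv⟩
    · exact hinj
  rw [Finset.card_sdiff_of_subset hUT] at h1
  have := Finset.card_le_card hUT
  omega



theorem exists_cons {v : List ℕ} (h : 1 ≤ v.length) : ∃ c r, v = c :: r := by
  cases v with
  | nil => simp at h
  | cons c r => exact ⟨c, r, rfl⟩

/-- (B) -/
theorem lemB (n : ℕ) :
    (Cls ℓ pX2 (n+1)).card + (Cls ℓ pX2 n).card ≤ (A ℓ n).card := by
  apply card_tail_le (n := n) _ _ _ 1
  · intro v hv
    rw [mem_Cls] at hv
    obtain ⟨hA, hl, h02⟩ := hv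
    obtain ⟨c, r, rfl⟩ := exists_cons (v := v) (by omega : 1 ≤ v.length)
    refine ⟨c, r, rfl, ?_⟩
    rw [g_cons_zero] at h02
    rw [show (2:ℕ) = 1 + 1 by rfl, g_cons_succ] at h02
    exact h02
  · intro v hv
    rw [mem_Cls] at hv
    obtain ⟨hA, hl, h02⟩ := hv
    obtain ⟨c, r, rfl⟩ := exists_cons (v := v) (by omega : 1 ≤ v.length)
    exact tail_mem_A ℓ hA
  · intro v hv hmem
    rw [mem_Cls] at hv hmem
    obtain ⟨hA, hl, h02⟩ := hv
    obtain ⟨hA', hl', h02'⟩ := hmem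
    obtain ⟨c, r, rfl⟩ := exists_cons (v := v) (by omega : 1 ≤ v.length)
    simp only [List.tail_cons] at hA' hl' h02'
    -- v = c :: r with c = g r 1 (from h02), and r has g r 0 = g r 2 : square of period 2
    apply not_sqf_of_eq (v := c :: r) (i := 0) (p := 2) (by norm_num) ?_ ?_ (A_sqf ℓ hA)
    · have : (c::r).length = n + 1 := A_length ℓ hA
      have : r.length = n := by simpa using this
      omega
    · intro j hj
      interval_cases j
      · simpa using h02
      · show g (c::r) 1 = g (c::r) 3
        rw [show (3:ℕ) = 2 + 1 by rfl, g_cons_succ, g_cons_succ]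
        exact h02'
  · intro x hx
    exact ((mem_Cls ℓ).mp hx).1

theorem gc0 {c : ℕ} {r : List ℕ} : g (c :: r) 0 = c := g_cons_zero
theorem gc1 {c : ℕ} {r : List ℕ} : g (c :: r) 1 = g r 0 := g_cons_succ
theorem gc2 {c : ℕ} {r : List ℕ} : g (c :: r) 2 = g r 1 := g_cons_succ
theorem gc3 {c : ℕ} {r : List ℕ} : g (c :: r) 3 = g r 2 := g_cons_succ
theorem gc4 {c : ℕ} {r : List ℕ} : g (c :: r) 4 = g r 3 := g_cons_succ
theorem gc5 {c : ℕ} {r : List ℕ} : g (c :: r) 5 = g r 4 := g_cons_succ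
theorem gc6 {c : ℕ} {r : List ℕ} : g (c :: r) 6 = g r 5 := g_cons_succ
theorem gc7 {c : ℕ} {r : List ℕ} : g (c :: r) 7 = g r 6 := g_cons_succ

/-- (C) -/
theorem lemC (n : ℕ) :
    (Cls ℓ pY (n+1)).card + (Cls ℓ pX2 n).card ≤ (A ℓ n).card := by
  apply card_tail_le (n := n) _ _ _ 2
  · intro v hv
    rw [mem_Cls] at hv
    obtain ⟨hA, hl, h03⟩ := hv
    obtain ⟨c, r, rfl⟩ := exists_cons (v := v) (by omega : 1 ≤ v.length)
    refine ⟨c, r, rfl, ?_⟩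
    rw [gc0, gc3] at h03
    exact h03
  · intro v hv
    rw [mem_Cls] at hv
    obtain ⟨hA, hl, h03⟩ := hv
    obtain ⟨c, r, rfl⟩ := exists_cons (v := v) (by omega : 1 ≤ v.length)
    exact tail_mem_A ℓ hA
  · intro v hv hmem
    rw [mem_Cls] at hv hmem
    obtain ⟨hA, hl, h03⟩ := hv
    obtain ⟨hA', hl', h02'⟩ := hmem
    obtain ⟨c, r, rfl⟩ := exists_cons (v := v) (by omega : 1 ≤ v.length)
    simp only [List.tail_cons] at hA' hl' h02'
    apply not_sqf_of_eq (v := c :: r) (i := 0) (p := 1) (by norm_num) (by simp; omega) ?_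
      (A_sqf ℓ hA)
    intro j hj
    interval_cases j
    show g (c::r) 0 = g (c::r) 1
    rw [gc0, gc1]
    rw [gc0, gc3] at h03
    rw [h03, h02']
  · intro x hx
    exact ((mem_Cls ℓ).mp hx).1

/-- (D) -/
theorem lemD (n : ℕ) :
    (Cls ℓ pX3 (n+1)).card + (Cls ℓ pX3 n).card ≤ (Cls ℓ pY n).card := by
  apply card_tail_le (n := n) _ _ _ 2
  · intro v hv
    rw [mem_Cls] at hv
    obtain ⟨hA, hl, h03, h14⟩ := hv
    obtain ⟨c, r, rfl⟩ := exists_cons (v := v) (by omega : 1 ≤ v.length)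
    refine ⟨c, r, rfl, ?_⟩
    rw [gc0, gc3] at h03
    exact h03
  · intro v hv
    rw [mem_Cls] at hv
    obtain ⟨hA, hl, h03, h14⟩ := hv
    obtain ⟨c, r, rfl⟩ := exists_cons (v := v) (by omega : 1 ≤ v.length)
    have hlr : r.length + 1 = n + 1 := by simpa using A_length ℓ hA
    have hl2 : 4 ≤ r.length + 1 + 1 := by
      have := hl; simp only [List.length_cons] at this; omega
    rw [mem_Cls]
    refine ⟨tail_mem_A ℓ hA, by simp only [List.tail_cons]; have := hl; simp only [List.length_cons] at this; omega, ?_⟩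
    rw [gc1, gc4] at h14
    exact h14
  · intro v hv hmem
    rw [mem_Cls] at hv hmem
    obtain ⟨hA, hl, h03, h14⟩ := hv
    obtain ⟨hA', hl', h03', h14'⟩ := hmem
    obtain ⟨c, r, rfl⟩ := exists_cons (v := v) (by omega : 1 ≤ v.length)
    simp only [List.tail_cons] at hA' hl' h03' h14'
    apply not_sqf_of_eq (v := c :: r) (i := 0) (p := 3) (by norm_num) (by simp; omega) ?_
      (A_sqf ℓ hA)
    intro j hj
    interval_cases j
    · simpa using h03
    · simpa using h14
    · show g (c::r) 2 = g (c::r) 5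
      rw [gc2, gc5]
      exact h14'
  · intro x hx
    rw [mem_Cls] at hx ⊢
    obtain ⟨hA, hl, h03, h14⟩ := hx
    exact ⟨hA, by omega, h03⟩

/-- (E) -/
theorem lemE (n : ℕ) :
    (Cls ℓ pZ1 (n+1)).card + (Cls ℓ pY n).card ≤ (A ℓ n).card := by
  apply card_tail_le (n := n) _ _ _ 3
  · intro v hv
    rw [mem_Cls] at hv
    obtain ⟨hA, hl, h04⟩ := hv
    obtain ⟨c, r, rfl⟩ := exists_cons (v := v) (by omega : 1 ≤ v.length)
    refine ⟨c, r, rfl, ?_⟩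
    rw [gc0, gc4] at h04
    exact h04
  · intro v hv
    rw [mem_Cls] at hv
    obtain ⟨hA, hl, h04⟩ := hv
    obtain ⟨c, r, rfl⟩ := exists_cons (v := v) (by omega : 1 ≤ v.length)
    exact tail_mem_A ℓ hA
  · intro v hv hmem
    rw [mem_Cls] at hv hmem
    obtain ⟨hA, hl, h04⟩ := hv
    obtain ⟨hA', hl', h03'⟩ := hmem
    obtain ⟨c, r, rfl⟩ := exists_cons (v := v) (by omega : 1 ≤ v.length)
    simp only [List.tail_cons] at hA' hl' h03'
    apply not_sqf_of_eq (v := c :: r) (i := 0) (p := 1) (by norm_num) (by simp; omega) ?_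
      (A_sqf ℓ hA)
    intro j hj
    interval_cases j
    show g (c::r) 0 = g (c::r) 1
    rw [gc0, gc1]
    rw [gc0, gc4] at h04
    rw [h04, h03']
  · intro x hx
    exact ((mem_Cls ℓ).mp hx).1

/-- (F) -/
theorem lemF (n : ℕ) :
    (Cls ℓ pZ2 (n+1)).card + (Cls ℓ pX4 n).card ≤ (Cls ℓ pZ1 n).card := by
  apply card_tail_le (n := n) _ _ _ 3
  · intro v hv
    rw [mem_Cls] at hv
    obtain ⟨hA, hl, h04, h15⟩ := hv
    obtain ⟨c, r, rfl⟩ := exists_cons (v := v) (by omega : 1 ≤ v.length)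
    refine ⟨c, r, rfl, ?_⟩
    rw [gc0, gc4] at h04
    exact h04
  · intro v hv
    rw [mem_Cls] at hv
    obtain ⟨hA, hl, h04, h15⟩ := hv
    obtain ⟨c, r, rfl⟩ := exists_cons (v := v) (by omega : 1 ≤ v.length)
    have hlr : r.length + 1 = n + 1 := by simpa using A_length ℓ hA
    have hl2 : 4 ≤ r.length + 1 + 1 := by
      have := hl; simp only [List.length_cons] at this; omega
    rw [mem_Cls]
    refine ⟨tail_mem_A ℓ hA, by simp only [List.tail_cons]; have := hl; simp only [List.length_cons] at this; omega, ?_⟩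
    rw [gc1, gc5] at h15
    exact h15
  · intro v hv hmem
    rw [mem_Cls] at hv hmem
    obtain ⟨hA, hl, h04, h15⟩ := hv
    obtain ⟨hA', hl', h04', h15', h26'⟩ := hmem
    obtain ⟨c, r, rfl⟩ := exists_cons (v := v) (by omega : 1 ≤ v.length)
    simp only [List.tail_cons] at hA' hl' h04' h15' h26'
    apply not_sqf_of_eq (v := c :: r) (i := 0) (p := 4) (by norm_num) (by simp; omega) ?_
      (A_sqf ℓ hA)
    intro j hj
    interval_cases j
    · simpa using h04
    · simpa using h15
    · show g (c::r) 2 = g (c::r) 6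
      rw [gc2, gc6]
      exact h15'
    · show g (c::r) 3 = g (c::r) 7
      rw [gc3, gc7]
      exact h26'
  · intro x hx
    rw [mem_Cls] at hx ⊢
    obtain ⟨hA, hl, h04, h15⟩ := hx
    exact ⟨hA, by omega, h04⟩

/-- (G) -/
theorem lemG (n : ℕ) :
    (Cls ℓ pX4 (n+1)).card + (Cls ℓ pX4 n).card ≤ (Cls ℓ pZ2 n).card := by
  apply card_tail_le (n := n) _ _ _ 3
  · intro v hv
    rw [mem_Cls] at hv
    obtain ⟨hA, hl, h04, h15, h26⟩ := hv
    obtain ⟨c, r, rfl⟩ := exists_cons (v := v) (by omega : 1 ≤ v.length)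
    refine ⟨c, r, rfl, ?_⟩
    rw [gc0, gc4] at h04
    exact h04
  · intro v hv
    rw [mem_Cls] at hv
    obtain ⟨hA, hl, h04, h15, h26⟩ := hv
    obtain ⟨c, r, rfl⟩ := exists_cons (v := v) (by omega : 1 ≤ v.length)
    have hlr : r.length + 1 = n + 1 := by simpa using A_length ℓ hA
    rw [mem_Cls]
    refine ⟨tail_mem_A ℓ hA, by simp only [List.tail_cons]; have := hl; simp only [List.length_cons] at this; omega, ?_, ?_⟩
    · rw [gc1, gc5] at h15
      exact h15
    · rw [gc2, gc6] at h26
      exact h26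
  · intro v hv hmem
    rw [mem_Cls] at hv hmem
    obtain ⟨hA, hl, h04, h15, h26⟩ := hv
    obtain ⟨hA', hl', h04', h15', h26'⟩ := hmem
    obtain ⟨c, r, rfl⟩ := exists_cons (v := v) (by omega : 1 ≤ v.length)
    simp only [List.tail_cons] at hA' hl' h04' h15' h26'
    apply not_sqf_of_eq (v := c :: r) (i := 0) (p := 4) (by norm_num) (by simp; omega) ?_
      (A_sqf ℓ hA)
    intro j hj
    interval_cases j
    · simpa using h04
    · simpa using h15
    · simpa using h26
    · show g (c::r) 3 = g (c::r) 7
      rw [gc3, gc7]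
      exact h26'
  · intro x hx
    rw [mem_Cls] at hx ⊢
    obtain ⟨hA, hl, h04, h15, h26⟩ := hx
    exact ⟨hA, by omega, h04, h15⟩

theorem RW_drop {m k : ℕ} {r : List ℕ} (h : r ∈ RW ℓ m) : r.drop k ∈ RW ℓ (m - k) := by
  rw [mem_RW] at h ⊢
  obtain ⟨hlen, hmem⟩ := h
  refine ⟨by simp [hlen], ?_⟩
  intro i hi
  rw [g_drop (by omega)]
  have := hmem (k + i) (by omega)
  convert this using 2
  omega

theorem drop_mem_A {n k : ℕ} {r : List ℕ} (h : r ∈ A ℓ n) : r.drop k ∈ A ℓ (n - k) := by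
  rw [mem_A] at h ⊢
  exact ⟨RW_drop ℓ h.1, sqf_infix (List.drop_suffix k r).isInfix h.2⟩

/-- (A): the master extension inequality -/
theorem lemA (h4 : ∀ i, (ℓ i).card = 4) (n : ℕ) :
    4 * (A ℓ n).card ≤ (A ℓ (n+1)).card + (A ℓ n).card + (Cls ℓ pX2 n).card
      + (Cls ℓ pX3 n).card + (Cls ℓ pX4 n).card
      + ∑ p ∈ Finset.Icc 5 ((n+1)/2), (A ℓ (n+1-p)).card := by
  classical
  set Ext : Finset (List ℕ) :=
    ((ℓ n) ×ˢ (A ℓ n)).image (fun q => q.1 :: q.2) with hExt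
  have hinj : Function.Injective (fun q : ℕ × List ℕ => q.1 :: q.2) := by
    rintro ⟨a, b⟩ ⟨c, d⟩ h
    simpa [Prod.ext_iff] using h
  have hcard : Ext.card = 4 * (A ℓ n).card := by
    rw [hExt, Finset.card_image_of_injective _ hinj, Finset.card_product, h4 n]
  have hmemExt : ∀ v ∈ Ext, ∃ c r, v = c :: r ∧ c ∈ ℓ n ∧ r ∈ A ℓ n := by
    intro v hv
    rw [hExt, Finset.mem_image] at hv
    obtain ⟨⟨c, r⟩, hq, rfl⟩ := hv
    rw [Finset.mem_product] at hq
    exact ⟨c, r, rfl, hq.1, hq.2⟩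
  have hlenExt : ∀ v ∈ Ext, v.length = n + 1 := by
    intro v hv
    obtain ⟨c, r, rfl, hc, hr⟩ := hmemExt v hv
    simp [A_length ℓ hr]
  -- the square-free extensions are in A (n+1)
  have hgood : Ext.filter (fun v => SquareFree v) ⊆ A ℓ (n+1) := by
    intro v hv
    rw [Finset.mem_filter] at hv
    obtain ⟨hvE, hsf⟩ := hv
    obtain ⟨c, r, rfl, hc, hr⟩ := hmemExt v hvE
    rw [mem_A]
    refine ⟨?_, hsf⟩
    show c :: r ∈ RW ℓ (n+1)
    rw [RW, Finset.mem_image]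
    refine ⟨(c, r), ?_, rfl⟩
    rw [Finset.mem_product]
    exact ⟨hc, ((mem_A ℓ).mp hr).1⟩
  have hsplit : (Ext.filter (fun v => SquareFree v)).card
      + (Ext.filter (fun v => ¬ SquareFree v)).card = Ext.card :=
    Finset.card_filter_add_card_filter_not _
  set Bad := Ext.filter (fun v => ¬ SquareFree v) with hBad
  -- Bad is covered by prefix-square periods
  have hcover : Bad ⊆ (({1, 2, 3, 4} : Finset ℕ) ∪ Finset.Icc 5 ((n+1)/2)).biUnion
      (fun p => Bad.filter (fun v => PSq p v)) := by
    intro v hv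
    have hv' := hv
    rw [hBad, Finset.mem_filter] at hv'
    obtain ⟨hvE, hnsf⟩ := hv'
    obtain ⟨c, r, rfl, hc, hr⟩ := hmemExt v hvE
    obtain ⟨p, hp1, hp2, hps⟩ := exists_psq (A_sqf ℓ hr) hnsf
    rw [Finset.mem_biUnion]
    refine ⟨p, ?_, by rw [Finset.mem_filter]; exact ⟨hv, hps⟩⟩
    rw [Finset.mem_union, Finset.mem_Icc]
    have hrl : r.length = n := A_length ℓ hr
    by_cases h5 : p ≤ 4
    · left; simp; omega
    · right
      constructor
      · omega
      · rw [Nat.le_div_iff_mul_le (by norm_num)]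
        omega
  -- bounds for p = 1
  have hb1 : (Bad.filter (fun v => PSq 1 v)).card ≤ (A ℓ n).card := by
    apply Finset.card_le_card_of_injOn List.tail
    · intro v hv
      rw [Finset.mem_coe, Finset.mem_filter, hBad, Finset.mem_filter] at hv
      obtain ⟨⟨hvE, _⟩, _⟩ := hv
      obtain ⟨c, r, rfl, hc, hr⟩ := hmemExt v hvE
      simpa using hr
    · intro a ha b hb hab
      simp only [Finset.coe_filter, Set.mem_setOf_eq] at ha hb
      obtain ⟨haB, hpa⟩ := ha
      obtain ⟨hbB, hpb⟩ := hb
      rw [hBad, Finset.mem_filter] at haB hbB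
      obtain ⟨c1, r1, rfl, _, _⟩ := hmemExt a haB.1
      obtain ⟨c2, r2, rfl, _, _⟩ := hmemExt b hbB.1
      simp only [List.tail_cons] at hab
      subst hab
      have e1 : c1 = g r1 0 := by
        have := hpa.2 0 (by norm_num)
        rw [gc0, gc1] at this
        exact this
      have e2 : c2 = g r1 0 := by
        have := hpb.2 0 (by norm_num)
        rw [gc0, gc1] at this
        exact this
      rw [e1, e2]
  -- generic small-period bound (p = 2, 3, 4) stated for each class
  have hb2 : (Bad.filter (fun v => PSq 2 v)).card ≤ (Cls ℓ pX2 n).card := by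
    apply Finset.card_le_card_of_injOn List.tail
    · intro v hv
      rw [Finset.mem_coe, Finset.mem_filter, hBad, Finset.mem_filter] at hv
      obtain ⟨⟨hvE, _⟩, hps⟩ := hv
      obtain ⟨c, r, rfl, hc, hr⟩ := hmemExt v hvE
      have hlen := hps.1
      simp only [List.length_cons] at hlen
      have h1 := hps.2 1 (by norm_num)
      rw [gc1, gc3] at h1
      simp only [List.tail_cons, Finset.mem_coe]
      rw [mem_Cls]
      have hrl : r.length = n := A_length ℓ hr
      exact ⟨hr, by omega, h1⟩
    · intro a ha b hb hab
      simp only [Finset.coe_filter, Set.mem_setOf_eq] at ha hb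
      obtain ⟨haB, hpa⟩ := ha
      obtain ⟨hbB, hpb⟩ := hb
      rw [hBad, Finset.mem_filter] at haB hbB
      obtain ⟨c1, r1, rfl, _, _⟩ := hmemExt a haB.1
      obtain ⟨c2, r2, rfl, _, _⟩ := hmemExt b hbB.1
      simp only [List.tail_cons] at hab
      subst hab
      have e1 : c1 = g r1 1 := by
        have := hpa.2 0 (by norm_num)
        rw [gc0, gc2] at this
        exact this
      have e2 : c2 = g r1 1 := by
        have := hpb.2 0 (by norm_num)
        rw [gc0, gc2] at this
        exact this
      rw [e1, e2]
  have hb3 : (Bad.filter (fun v => PSq 3 v)).card ≤ (Cls ℓ pX3 n).card := by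
    apply Finset.card_le_card_of_injOn List.tail
    · intro v hv
      rw [Finset.mem_coe, Finset.mem_filter, hBad, Finset.mem_filter] at hv
      obtain ⟨⟨hvE, _⟩, hps⟩ := hv
      obtain ⟨c, r, rfl, hc, hr⟩ := hmemExt v hvE
      have hlen := hps.1
      simp only [List.length_cons] at hlen
      have h1 := hps.2 1 (by norm_num)
      rw [gc1, gc4] at h1
      have h2 := hps.2 2 (by norm_num)
      rw [gc2, gc5] at h2
      simp only [List.tail_cons, Finset.mem_coe]
      rw [mem_Cls]
      have hrl : r.length = n := A_length ℓ hr
      exact ⟨hr, by omega, h1, h2⟩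
    · intro a ha b hb hab
      simp only [Finset.coe_filter, Set.mem_setOf_eq] at ha hb
      obtain ⟨haB, hpa⟩ := ha
      obtain ⟨hbB, hpb⟩ := hb
      rw [hBad, Finset.mem_filter] at haB hbB
      obtain ⟨c1, r1, rfl, _, _⟩ := hmemExt a haB.1
      obtain ⟨c2, r2, rfl, _, _⟩ := hmemExt b hbB.1
      simp only [List.tail_cons] at hab
      subst hab
      have e1 : c1 = g r1 2 := by
        have := hpa.2 0 (by norm_num)
        rw [gc0, gc3] at this
        exact this
      have e2 : c2 = g r1 2 := by
        have := hpb.2 0 (by norm_num)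
        rw [gc0, gc3] at this
        exact this
      rw [e1, e2]
  have hb4 : (Bad.filter (fun v => PSq 4 v)).card ≤ (Cls ℓ pX4 n).card := by
    apply Finset.card_le_card_of_injOn List.tail
    · intro v hv
      rw [Finset.mem_coe, Finset.mem_filter, hBad, Finset.mem_filter] at hv
      obtain ⟨⟨hvE, _⟩, hps⟩ := hv
      obtain ⟨c, r, rfl, hc, hr⟩ := hmemExt v hvE
      have hlen := hps.1
      simp only [List.length_cons] at hlen
      have h1 := hps.2 1 (by norm_num)
      rw [gc1, gc5] at h1
      have h2 := hps.2 2 (by norm_num)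
      rw [gc2, gc6] at h2
      have h3 := hps.2 3 (by norm_num)
      rw [gc3, gc7] at h3
      simp only [List.tail_cons, Finset.mem_coe]
      rw [mem_Cls]
      have hrl : r.length = n := A_length ℓ hr
      exact ⟨hr, by omega, h1, h2, h3⟩
    · intro a ha b hb hab
      simp only [Finset.coe_filter, Set.mem_setOf_eq] at ha hb
      obtain ⟨haB, hpa⟩ := ha
      obtain ⟨hbB, hpb⟩ := hb
      rw [hBad, Finset.mem_filter] at haB hbB
      obtain ⟨c1, r1, rfl, _, _⟩ := hmemExt a haB.1
      obtain ⟨c2, r2, rfl, _, _⟩ := hmemExt b hbB.1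
      simp only [List.tail_cons] at hab
      subst hab
      have e1 : c1 = g r1 3 := by
        have := hpa.2 0 (by norm_num)
        rw [gc0, gc4] at this
        exact this
      have e2 : c2 = g r1 3 := by
        have := hpb.2 0 (by norm_num)
        rw [gc0, gc4] at this
        exact this
      rw [e1, e2]
  -- long periods
  have hbp : ∀ p ∈ Finset.Icc 5 ((n+1)/2),
      (Bad.filter (fun v => PSq p v)).card ≤ (A ℓ (n+1-p)).card := by
    intro p hp
    apply Finset.card_le_card_of_injOn (List.drop p)
    · intro v hv
      rw [Finset.mem_coe, Finset.mem_filter, hBad, Finset.mem_filter] at hv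
      obtain ⟨⟨hvE, hnsf⟩, hps⟩ := hv
      have hgd : v ∈ A ℓ (n+1) ∨ True := Or.inr trivial
      -- v itself may not be square-free; but drop p v is an infix of tail
      obtain ⟨c, r, rfl, hc, hr⟩ := hmemExt v hvE
      have hlen := hps.1
      simp only [List.length_cons] at hlen
      have hrl : r.length = n := A_length ℓ hr
      rw [Finset.mem_Icc] at hp
      obtain ⟨q, rfl⟩ : ∃ q, p = q + 1 := ⟨p - 1, by omega⟩
      have hdrop : (c :: r).drop (q+1) = r.drop q := by simp
      rw [hdrop]
      have := drop_mem_A ℓ (k := q) hr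
      have heq : n - q = n + 1 - (q + 1) := by omega
      rwa [heq] at this
    · intro a ha b hb hab
      simp only [Finset.coe_filter, Set.mem_setOf_eq] at ha hb
      obtain ⟨haB, hpa⟩ := ha
      obtain ⟨hbB, hpb⟩ := hb
      rw [psq_reconstruct hpa, psq_reconstruct hpb, hab]
  -- put it together
  have hbadcard : Bad.card ≤ (A ℓ n).card + (Cls ℓ pX2 n).card + (Cls ℓ pX3 n).card
      + (Cls ℓ pX4 n).card + ∑ p ∈ Finset.Icc 5 ((n+1)/2), (A ℓ (n+1-p)).card := by
    have h1 := Finset.card_le_card hcover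
    have h2 := Finset.card_biUnion_le (s := ({1, 2, 3, 4} : Finset ℕ) ∪ Finset.Icc 5 ((n+1)/2))
      (t := fun p => Bad.filter (fun v => PSq p v))
    have hdisj : Disjoint ({1, 2, 3, 4} : Finset ℕ) (Finset.Icc 5 ((n+1)/2)) := by
      rw [Finset.disjoint_left]
      intro a ha ha'
      rw [Finset.mem_Icc] at ha'
      simp at ha
      omega
    rw [Finset.sum_union hdisj] at h2
    have h3 : ∑ p ∈ ({1, 2, 3, 4} : Finset ℕ), (Bad.filter (fun v => PSq p v)).card
        ≤ (A ℓ n).card + (Cls ℓ pX2 n).card + (Cls ℓ pX3 n).card + (Cls ℓ pX4 n).card := by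
      rw [show ({1, 2, 3, 4} : Finset ℕ) = {1} ∪ {2} ∪ {3} ∪ {4} by decide]
      rw [Finset.sum_union (by decide), Finset.sum_union (by decide), Finset.sum_union (by decide)]
      simp only [Finset.sum_singleton]
      omega
    have h4' : ∑ p ∈ Finset.Icc 5 ((n+1)/2), (Bad.filter (fun v => PSq p v)).card
        ≤ ∑ p ∈ Finset.Icc 5 ((n+1)/2), (A ℓ (n+1-p)).card :=
      Finset.sum_le_sum hbp
    omega
  have hgoodcard : (Ext.filter (fun v => SquareFree v)).card ≤ (A ℓ (n+1)).card :=
    Finset.card_le_card hgood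
  omega

/-- subset facts -/
theorem subX3Y (n : ℕ) : Cls ℓ pX3 n ⊆ Cls ℓ pY n := by
  intro r h
  rw [mem_Cls] at h ⊢
  obtain ⟨hA, hl, h1, h2⟩ := h
  exact ⟨hA, by omega, h1⟩

theorem subZ2Z1 (n : ℕ) : Cls ℓ pZ2 n ⊆ Cls ℓ pZ1 n := by
  intro r h
  rw [mem_Cls] at h ⊢
  obtain ⟨hA, hl, h1, h2⟩ := h
  exact ⟨hA, by omega, h1⟩

theorem subX4Z1 (n : ℕ) : Cls ℓ pX4 n ⊆ Cls ℓ pZ1 n := by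
  intro r h
  rw [mem_Cls] at h ⊢
  obtain ⟨hA, hl, h1, h2, h3⟩ := h
  exact ⟨hA, by omega, h1⟩

/-- disjointness facts -/
theorem disjX2Y (n : ℕ) : Disjoint (Cls ℓ pX2 n) (Cls ℓ pY n) := by
  rw [Finset.disjoint_left]
  intro r h1 h2
  rw [mem_Cls] at h1 h2
  obtain ⟨hA, hl1, e1⟩ := h1
  obtain ⟨_, hl2, e2⟩ := h2
  exact not_sqf_of_eq (v := r) (i := 2) (p := 1) (by norm_num) (by omega)
    (by intro j hj; interval_cases j; simpa using e1.symm.trans e2) (A_sqf ℓ hA)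

theorem disjZ1Y (n : ℕ) : Disjoint (Cls ℓ pZ1 n) (Cls ℓ pY n) := by
  rw [Finset.disjoint_left]
  intro r h1 h2
  rw [mem_Cls] at h1 h2
  obtain ⟨hA, hl1, e1⟩ := h1
  obtain ⟨_, hl2, e2⟩ := h2
  exact not_sqf_of_eq (v := r) (i := 3) (p := 1) (by norm_num) (by omega)
    (by intro j hj; interval_cases j; simpa using e2.symm.trans e1) (A_sqf ℓ hA)

/-- the union bound used for the potential estimate -/
theorem cls_union_bound (n : ℕ) :
    (Cls ℓ pX2 n ∪ Cls ℓ pZ1 n).card + (Cls ℓ pY n).card ≤ (A ℓ n).card := by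
  classical
  have hdisj : Disjoint (Cls ℓ pX2 n ∪ Cls ℓ pZ1 n) (Cls ℓ pY n) :=
    Finset.disjoint_union_left.mpr ⟨disjX2Y ℓ n, disjZ1Y ℓ n⟩
  rw [← Finset.card_union_of_disjoint hdisj]
  apply Finset.card_le_card
  intro r h
  rcases Finset.mem_union.mp h with h | h
  · rcases Finset.mem_union.mp h with h | h
    · exact ((mem_Cls ℓ).mp h).1
    · exact ((mem_Cls ℓ).mp h).1
  · exact ((mem_Cls ℓ).mp h).1

/-- A 0 has exactly the empty word -/
theorem sqf_nil : SquareFree ([] : List ℕ) := by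
  intro u hu hinf
  have := List.eq_nil_of_infix_nil hinf
  rcases List.append_eq_nil_iff.mp this with ⟨h1, -⟩
  exact hu h1

theorem A_zero : A ℓ 0 = {[]} := by
  ext r
  rw [mem_A, mem_RW]
  simp only [Finset.mem_singleton]
  constructor
  · rintro ⟨⟨h1, -⟩, -⟩
    exact List.length_eq_zero_iff.mp h1
  · rintro rfl
    exact ⟨⟨rfl, by intro i hi; omega⟩, sqf_nil⟩

theorem Cls_zero {P : List ℕ → Prop} (hP : ∀ r, P r → 1 ≤ r.length) : Cls ℓ P 0 = ∅ := by
  ext r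
  simp only [Finset.notMem_empty, iff_false, mem_Cls, not_and]
  intro hA hPr
  have h0 : r.length = 0 := A_length ℓ hA
  have := hP r hPr
  omega

section Assembly

noncomputable def Cc (n : ℕ) : ℝ := ((A ℓ n).card : ℝ)
noncomputable def x2 (n : ℕ) : ℝ := ((Cls ℓ pX2 n).card : ℝ)
noncomputable def yy (n : ℕ) : ℝ := ((Cls ℓ pY n).card : ℝ)
noncomputable def x3 (n : ℕ) : ℝ := ((Cls ℓ pX3 n).card : ℝ)
noncomputable def z1 (n : ℕ) : ℝ := ((Cls ℓ pZ1 n).card : ℝ)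
noncomputable def z2 (n : ℕ) : ℝ := ((Cls ℓ pZ2 n).card : ℝ)
noncomputable def x4 (n : ℕ) : ℝ := ((Cls ℓ pX4 n).card : ℝ)

noncomputable def Phi (n : ℕ) : ℝ :=
  Cc ℓ n - (2607/10000) * x2 ℓ n - (1007/10000) * yy ℓ n - (29/100) * x3 ℓ n
    - (433/10000) * z1 ℓ n - (106/1000) * z2 ℓ n - (2597/10000) * x4 ℓ n

theorem nu_C_le_Phi (n : ℕ) : (3303/10000) * Cc ℓ n ≤ Phi ℓ n := by
  have hU1 : x2 ℓ n ≤ ((Cls ℓ pX2 n ∪ Cls ℓ pZ1 n).card : ℝ) := by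
    rw [x2]; exact_mod_cast Finset.card_le_card Finset.subset_union_left
  have hU2 : z1 ℓ n ≤ ((Cls ℓ pX2 n ∪ Cls ℓ pZ1 n).card : ℝ) := by
    rw [z1]; exact_mod_cast Finset.card_le_card Finset.subset_union_right
  have hz2 : z2 ℓ n ≤ z1 ℓ n := by
    rw [z2, z1]; exact_mod_cast Finset.card_le_card (subZ2Z1 ℓ n)
  have hx4 : x4 ℓ n ≤ z1 ℓ n := by
    rw [x4, z1]; exact_mod_cast Finset.card_le_card (subX4Z1 ℓ n)
  have hx3 : x3 ℓ n ≤ yy ℓ n := by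
    rw [x3, yy]; exact_mod_cast Finset.card_le_card (subX3Y ℓ n)
  have hUb : ((Cls ℓ pX2 n ∪ Cls ℓ pZ1 n).card : ℝ) + yy ℓ n ≤ Cc ℓ n := by
    rw [yy, Cc]; exact_mod_cast cls_union_bound ℓ n
  have h0 : (0:ℝ) ≤ yy ℓ n := Nat.cast_nonneg _
  have h1 : (0:ℝ) ≤ z1 ℓ n := Nat.cast_nonneg _
  have h2 : (0:ℝ) ≤ x2 ℓ n := Nat.cast_nonneg _
  have h3 : (0:ℝ) ≤ x3 ℓ n := Nat.cast_nonneg _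
  have h5 : (0:ℝ) ≤ z2 ℓ n := Nat.cast_nonneg _
  have h6 : (0:ℝ) ≤ x4 ℓ n := Nat.cast_nonneg _
  have h7 : (0:ℝ) ≤ ((Cls ℓ pX2 n ∪ Cls ℓ pZ1 n).card : ℝ) := Nat.cast_nonneg _
  rw [Phi]
  linarith

theorem Phi_le_C (n : ℕ) : Phi ℓ n ≤ Cc ℓ n := by
  have h0 : (0:ℝ) ≤ yy ℓ n := Nat.cast_nonneg _
  have h1 : (0:ℝ) ≤ z1 ℓ n := Nat.cast_nonneg _
  have h2 : (0:ℝ) ≤ x2 ℓ n := Nat.cast_nonneg _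
  have h3 : (0:ℝ) ≤ x3 ℓ n := Nat.cast_nonneg _
  have h5 : (0:ℝ) ≤ z2 ℓ n := Nat.cast_nonneg _
  have h6 : (0:ℝ) ≤ x4 ℓ n := Nat.cast_nonneg _
  rw [Phi]
  linarith

theorem Phi_nonneg (n : ℕ) : 0 ≤ Phi ℓ n := by
  have := nu_C_le_Phi ℓ n
  have h : (0:ℝ) ≤ Cc ℓ n := Nat.cast_nonneg _
  linarith

/-- geometric tail bound -/
theorem geo_bound (M : ℕ) :
    (∑ p ∈ Finset.Icc 5 M, ((20:ℝ)/49)^(p-1)) ≤ 469/10000 := by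
  have key : ∀ M : ℕ, 4 ≤ M →
      (∑ p ∈ Finset.Icc 5 M, ((20:ℝ)/49)^(p-1))
        ≤ (((20:ℝ)/49)^4 - ((20:ℝ)/49)^M) * (49/29) := by
    intro M hM
    induction M, hM using Nat.le_induction with
    | base => simp
    | succ M hM ih =>
        rw [Finset.sum_Icc_succ_top (by omega)]
        have hstep : ((20:ℝ)/49)^(M+1-1) = ((20:ℝ)/49)^M := by norm_num
        rw [hstep]
        have hpow : ((20:ℝ)/49)^(M+1) = ((20:ℝ)/49)^M * (20/49) := pow_succ _ _
        rw [hpow]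
        linarith
  by_cases hM : 4 ≤ M
  · have := key M hM
    have hp : (0:ℝ) ≤ ((20:ℝ)/49)^M := by positivity
    nlinarith
  · have : Finset.Icc 5 M = ∅ := by
      apply Finset.Icc_eq_empty
      omega
    rw [this]
    norm_num

/-- chain lemma: iterate the step inequality -/
theorem chain (n : ℕ) (hstep : ∀ m < n, (49/20:ℝ) * Phi ℓ m ≤ Phi ℓ (m+1)) :
    ∀ k m, m + k ≤ n → (49/20:ℝ)^k * Phi ℓ m ≤ Phi ℓ (m+k) := by
  intro k
  induction k with
  | zero => intro m hm; simp
  | succ k ih =>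
      intro m hm
      have h1 : (49/20:ℝ)^k * Phi ℓ m ≤ Phi ℓ (m+k) := ih m (by omega)
      have h2 : (49/20:ℝ) * Phi ℓ (m+k) ≤ Phi ℓ (m+k+1) := hstep (m+k) (by omega)
      calc (49/20:ℝ)^(k+1) * Phi ℓ m = (49/20) * ((49/20:ℝ)^k * Phi ℓ m) := by ring
    _ ≤ (49/20) * Phi ℓ (m+k) := by nlinarith
    _ ≤ Phi ℓ (m+k+1) := h2

/-- the key induction step -/
theorem step (h4 : ∀ i, (ℓ i).card = 4) (n : ℕ)
    (hstep : ∀ m < n, (49/20:ℝ) * Phi ℓ m ≤ Phi ℓ (m+1)) :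
    (49/20:ℝ) * Phi ℓ n ≤ Phi ℓ (n+1) := by
  -- tail bound
  have htail : (∑ p ∈ Finset.Icc 5 ((n+1)/2), Cc ℓ (n+1-p))
      ≤ (469/3303) * Cc ℓ n := by
    have hterm : ∀ p ∈ Finset.Icc 5 ((n+1)/2),
        Cc ℓ (n+1-p) ≤ ((20:ℝ)/49)^(p-1) / (3303/10000) * Cc ℓ n := by
      intro p hp
      rw [Finset.mem_Icc] at hp
      have hple : p ≤ n := by
        have h2 : 2 * p ≤ n + 1 := by
          have := (Nat.le_div_iff_mul_le (k := 2) (by norm_num)).mp hp.2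
          omega
        omega
      have hmk : (n + 1 - p) + (p - 1) = n := by omega
      have hch := chain ℓ n hstep (p-1) (n+1-p) (by omega)
      rw [hmk] at hch
      have hPC := Phi_le_C ℓ n
      have hq : (0:ℝ) < ((20:ℝ)/49)^(p-1) := by positivity
      have h1 : (49/20:ℝ)^(p-1) * ((3303/10000) * Cc ℓ (n+1-p)) ≤ Cc ℓ n := by
        calc (49/20:ℝ)^(p-1) * ((3303/10000) * Cc ℓ (n+1-p))
            ≤ (49/20:ℝ)^(p-1) * Phi ℓ (n+1-p) := by
              have hpow : (0:ℝ) < (49/20:ℝ)^(p-1) := by positivity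
              nlinarith [nu_C_le_Phi ℓ (n+1-p)]
          _ ≤ Phi ℓ n := hch
          _ ≤ Cc ℓ n := hPC
      have hqx : ((20:ℝ)/49)^(p-1) * (49/20:ℝ)^(p-1) = 1 := by
        rw [← mul_pow]
        norm_num
      have h2 := mul_le_mul_of_nonneg_left h1 (le_of_lt hq)
      rw [← mul_assoc, hqx, one_mul] at h2
      rw [div_mul_eq_mul_div, le_div_iff₀ (by norm_num : (0:ℝ) < 3303/10000)]
      calc Cc ℓ (n+1-p) * (3303/10000) = (3303/10000) * Cc ℓ (n+1-p) := by ring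
        _ ≤ ((20:ℝ)/49)^(p-1) * Cc ℓ n := h2
    calc (∑ p ∈ Finset.Icc 5 ((n+1)/2), Cc ℓ (n+1-p))
        ≤ ∑ p ∈ Finset.Icc 5 ((n+1)/2), ((20:ℝ)/49)^(p-1) / (3303/10000) * Cc ℓ n :=
          Finset.sum_le_sum hterm
      _ = (∑ p ∈ Finset.Icc 5 ((n+1)/2), ((20:ℝ)/49)^(p-1)) / (3303/10000) * Cc ℓ n := by
          rw [← Finset.sum_mul, ← Finset.sum_div]
      _ ≤ (469/10000) / (3303/10000) * Cc ℓ n := by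
          have hCn : (0:ℝ) ≤ Cc ℓ n := Nat.cast_nonneg _
          have hg := geo_bound ((n+1)/2)
          apply mul_le_mul_of_nonneg_right _ hCn
          apply div_le_div_of_nonneg_right hg (by norm_num)
      _ = (469/3303) * Cc ℓ n := by norm_num
  -- cast the counting lemmas
  have cA : 4 * Cc ℓ n ≤ Cc ℓ (n+1) + Cc ℓ n + x2 ℓ n + x3 ℓ n + x4 ℓ n
      + (∑ p ∈ Finset.Icc 5 ((n+1)/2), Cc ℓ (n+1-p)) := by
    have h := lemA ℓ h4 n
    simp only [Cc, x2, x3, x4]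
    exact_mod_cast h
  have cB : x2 ℓ (n+1) + x2 ℓ n ≤ Cc ℓ n := by
    have h := lemB ℓ n
    simp only [Cc, x2]
    exact_mod_cast h
  have cC : yy ℓ (n+1) + x2 ℓ n ≤ Cc ℓ n := by
    have h := lemC ℓ n
    simp only [Cc, x2, yy]
    exact_mod_cast h
  have cD : x3 ℓ (n+1) + x3 ℓ n ≤ yy ℓ n := by
    have h := lemD ℓ n
    simp only [x3, yy]
    exact_mod_cast h
  have cE : z1 ℓ (n+1) + yy ℓ n ≤ Cc ℓ n := by
    have h := lemE ℓ n
    simp only [Cc, z1, yy]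
    exact_mod_cast h
  have cF : z2 ℓ (n+1) + x4 ℓ n ≤ z1 ℓ n := by
    have h := lemF ℓ n
    simp only [z1, z2, x4]
    exact_mod_cast h
  have cG : x4 ℓ (n+1) + x4 ℓ n ≤ z2 ℓ n := by
    have h := lemG ℓ n
    simp only [z2, x4]
    exact_mod_cast h
  have n0 : (0:ℝ) ≤ x2 ℓ n := Nat.cast_nonneg _
  have n1 : (0:ℝ) ≤ yy ℓ n := Nat.cast_nonneg _
  have n2 : (0:ℝ) ≤ x3 ℓ n := Nat.cast_nonneg _
  have n3 : (0:ℝ) ≤ z1 ℓ n := Nat.cast_nonneg _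
  have n4 : (0:ℝ) ≤ z2 ℓ n := Nat.cast_nonneg _
  have n5 : (0:ℝ) ≤ x4 ℓ n := Nat.cast_nonneg _
  have n6 : (0:ℝ) ≤ Cc ℓ n := Nat.cast_nonneg _
  rw [Phi, Phi]
  linarith

theorem step_all (h4 : ∀ i, (ℓ i).card = 4) :
    ∀ n : ℕ, (49/20:ℝ) * Phi ℓ n ≤ Phi ℓ (n+1) := by
  intro n
  induction n using Nat.strong_induction_on with
  | _ n ih => exact step ℓ h4 n ih

theorem Phi_zero : Phi ℓ 0 = 1 := by
  have hC : (A ℓ 0).card = 1 := by rw [A_zero]; rfl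
  have e2 : (Cls ℓ pX2 0).card = 0 := by
    rw [Cls_zero ℓ (fun r hr => by have := hr.1; omega)]; rfl
  have eY : (Cls ℓ pY 0).card = 0 := by
    rw [Cls_zero ℓ (fun r hr => by have := hr.1; omega)]; rfl
  have e3 : (Cls ℓ pX3 0).card = 0 := by
    rw [Cls_zero ℓ (fun r hr => by have := hr.1; omega)]; rfl
  have eZ1 : (Cls ℓ pZ1 0).card = 0 := by
    rw [Cls_zero ℓ (fun r hr => by have := hr.1; omega)]; rfl
  have eZ2 : (Cls ℓ pZ2 0).card = 0 := by
    rw [Cls_zero ℓ (fun r hr => by have := hr.1; omega)]; rfl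
  have e4 : (Cls ℓ pX4 0).card = 0 := by
    rw [Cls_zero ℓ (fun r hr => by have := hr.1; omega)]; rfl
  rw [Phi, Cc, x2, yy, x3, z1, z2, x4, hC, e2, eY, e3, eZ1, eZ2, e4]
  norm_num

theorem main_bound (h4 : ∀ i, (ℓ i).card = 4) (n : ℕ) :
    (49/20:ℝ)^n ≤ ((A ℓ n).card : ℝ) := by
  have hph : (49/20:ℝ)^n ≤ Phi ℓ n := by
    induction n with
    | zero => rw [Phi_zero]; norm_num
    | succ n ih =>
        have h1 := step_all ℓ h4 n
        calc (49/20:ℝ)^(n+1) = (49/20) * (49/20:ℝ)^n := by ring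
          _ ≤ (49/20) * Phi ℓ n := by nlinarith
          _ ≤ Phi ℓ (n+1) := h1
  have := Phi_le_C ℓ n
  rw [Cc] at this
  linarith

end Assembly


theorem g_reverse {l : List ℕ} {i : ℕ} (h : i < l.length) :
    g l.reverse i = g l (l.length - 1 - i) := by
  rw [g_eq (by simpa using h), g_eq (by omega)]
  rw [List.getElem_reverse]

theorem set_eq (ℓ : ℕ → Finset ℕ) (n : ℕ) :
    {w : List ℕ | w.length = n ∧ SquareFree w ∧ Respects ℓ w}
      = (fun r => List.reverse r) '' (A ℓ n : Set (List ℕ)) := by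
  ext w
  simp only [Set.mem_setOf_eq, Set.mem_image, Finset.mem_coe]
  constructor
  · rintro ⟨hlen, hsf, hresp⟩
    refine ⟨w.reverse, ?_, by simp⟩
    rw [mem_A, mem_RW]
    refine ⟨⟨by simpa using hlen, ?_⟩, sqf_reverse hsf⟩
    intro i hi
    rw [g_reverse (by omega)]
    have hidx : w.length - 1 - i < w.length := by omega
    rw [g_eq hidx]
    have := hresp (w.length - 1 - i) hidx
    have h2 : ℓ (w.length - 1 - i) = ℓ (n - 1 - i) := by rw [hlen]
    exact h2 ▸ this
  · rintro ⟨r, hr, rfl⟩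
    have hlen : r.length = n := A_length ℓ hr
    refine ⟨by simpa using hlen, sqf_reverse (A_sqf ℓ hr), ?_⟩
    intro i hi
    simp only [List.length_reverse] at hi
    have h1 : r.reverse[i] = g r.reverse i := (g_eq (by simpa using hi)).symm
    rw [h1, g_reverse (by omega), g_eq (by omega)]
    have hmem := ((mem_A ℓ).mp hr).1
    rw [mem_RW] at hmem
    have := hmem.2 (r.length - 1 - i) (by omega)
    rw [g_eq (by omega)] at this
    rwa [show n - 1 - (r.length - 1 - i) = i by omega] at this

end SFP

/-- For every 4-list assignment and every `n ≥ 1`, there are at least `2.45 ^ n`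
square-free words of length `n` respecting the assignment. -/
theorem stmt0 (ℓ : ℕ → Finset ℕ) (h4 : ∀ i, (ℓ i).card = 4) (n : ℕ) (hn : 1 ≤ n) :
    (2.45 : ℝ) ^ n ≤
      ({w : List ℕ | w.length = n ∧ SquareFree w ∧ Respects ℓ w}.ncard : ℝ) := by
  have hmb := SFP.main_bound ℓ h4 n
  have hset := SFP.set_eq ℓ n
  rw [hset, Set.ncard_image_of_injective _ List.reverse_injective,
    Set.ncard_coe_finset]
  calc (2.45:ℝ)^n = (49/20:ℝ)^n := by norm_num
    _ ≤ _ := hmb
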